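/- The Lie algebra L_{7,3}² is a contraction of the Lie algebra L_{7,4}. In particular, a seven-dimensional indecomposable real Lie algebra from Turkowski's list with nontrivial Levi decomposition arises as a contraction in this way. -/

import Mathlib

open Filter Topology

/-- `IsContraction g h` : the Lie algebra `h` is a contraction of the Lie algebra `g`. -/
def IsContraction (g h : Type*) [LieRing g] [LieAlgebra ℝ g] [TopologicalSpace g]
    [LieRing h] [LieAlgebra ℝ h] : Prop :=
  ∃ (f : ℝ → (g ≃ₗ[ℝ] g)) (e : g ≃ₗ[ℝ] h), ∀ X Y : g,
    Filter.Tendsto (fun t : ℝ => (f t).symm ⁅f t X, f t Y⁆) Filter.atTop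
      (nhds (e.symm ⁅e X, e Y⁆))

/-- Structure constants of `L_{7,3}²` (upper triangular part, 0-based indices). -/
def L732T {L : Type*} [AddCommGroup L] [Module ℝ L] (b : Fin 7 → L) : Fin 7 → Fin 7 → L :=
  fun i j =>
    if i = 0 ∧ j = 1 then (2 : ℝ) • b 1 else
    if i = 0 ∧ j = 2 then (-2 : ℝ) • b 2 else
    if i = 1 ∧ j = 2 then b 0 else
    if i = 0 ∧ j = 3 then b 3 else
    if i = 0 ∧ j = 4 then -b 4 else
    if i = 1 ∧ j = 4 then b 3 else
    if i = 2 ∧ j = 3 then b 4 else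
    if i = 3 ∧ j = 6 then b 3 else
    if i = 4 ∧ j = 6 then b 4 else
    if i = 5 ∧ j = 6 then (2 : ℝ) • b 5 else 0

/-- Structure constants of `L_{7,4}` (upper triangular part, 0-based indices). -/
def L74T {L : Type*} [AddCommGroup L] [Module ℝ L] (b : Fin 7 → L) : Fin 7 → Fin 7 → L :=
  fun i j =>
    if i = 0 ∧ j = 1 then (2 : ℝ) • b 1 else
    if i = 0 ∧ j = 2 then (-2 : ℝ) • b 2 else
    if i = 1 ∧ j = 2 then b 0 else
    if i = 0 ∧ j = 3 then b 3 else
    if i = 0 ∧ j = 4 then -b 4 else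
    if i = 1 ∧ j = 4 then b 3 else
    if i = 2 ∧ j = 3 then b 4 else
    if i = 3 ∧ j = 4 then b 5 else
    if i = 3 ∧ j = 6 then b 3 else
    if i = 4 ∧ j = 6 then b 4 else
    if i = 5 ∧ j = 6 then (2 : ℝ) • b 5 else 0


section CtrAux

variable {A : Type} [LieRing A] [LieAlgebra ℝ A]
  [TopologicalSpace A] [IsTopologicalAddGroup A] [ContinuousSMul ℝ A] [T2Space A]

/-- Scaling coefficients for the contraction family. -/
noncomputable def csc (t : ℝ) (i : Fin 7) : ℝ := if i = 5 then t ^ 2 + 1 else 1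

lemma csc_ne (t : ℝ) (i : Fin 7) : csc t i ≠ 0 := by
  unfold csc; split <;> positivity

/-- The diagonal contraction family. -/
noncomputable def fdiag (bA : Module.Basis (Fin 7) ℝ A) (t : ℝ) : A ≃ₗ[ℝ] A :=
  bA.equivFun ≪≫ₗ
    (LinearEquiv.piCongrRight fun i =>
      LinearEquiv.smulOfNeZero ℝ ℝ (csc t i) (csc_ne t i)) ≪≫ₗ bA.equivFun.symm

set_option linter.unusedSectionVars false in
lemma fdiag_apply (bA : Module.Basis (Fin 7) ℝ A) (t : ℝ) (j : Fin 7) :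
    fdiag bA t (bA j) = csc t j • bA j := by
  classical
  simp only [fdiag, LinearEquiv.trans_apply, LinearEquiv.piCongrRight,
    Module.Basis.equivFun_symm_apply]
  rw [Finset.sum_eq_single j]
  · simp [LinearEquiv.smulOfNeZero, LinearEquiv.smulOfUnit, Module.Basis.equivFun_self,
      DistribMulAction.toLinearEquiv, smul_eq_mul]
  · intro i _ hij
    simp [LinearEquiv.smulOfNeZero, LinearEquiv.smulOfUnit, Module.Basis.equivFun_self,
      DistribMulAction.toLinearEquiv, smul_eq_mul, Ne.symm hij]
  · simp

set_option linter.unusedSectionVars false in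
lemma fdiag_symm_apply (bA : Module.Basis (Fin 7) ℝ A) (t : ℝ) (j : Fin 7) :
    (fdiag bA t).symm (bA j) = (csc t j)⁻¹ • bA j := by
  rw [LinearEquiv.symm_apply_eq, map_smul, fdiag_apply, smul_smul,
    inv_mul_cancel₀ (csc_ne t j), one_smul]

lemma sq_add_one_cancel (t c : ℝ) : (t ^ 2 + 1) * (c * (t ^ 2 + 1)⁻¹) = c := by
  rw [mul_comm c, ← mul_assoc, mul_inv_cancel₀ (by positivity : (t:ℝ) ^ 2 + 1 ≠ 0), one_mul]

lemma sum_lie' {L : Type*} [LieRing L] {ι : Type*} (s : Finset ι) (g : ι → L) (y : L) :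
    ⁅∑ i ∈ s, g i, y⁆ = ∑ i ∈ s, ⁅g i, y⁆ := by
  induction s using Finset.cons_induction with
  | empty => simp
  | cons a s ha ih => simp [Finset.sum_cons, add_lie, ih]

lemma lie_sum' {L : Type*} [LieRing L] {ι : Type*} (s : Finset ι) (g : ι → L) (x : L) :
    ⁅x, ∑ i ∈ s, g i⁆ = ∑ i ∈ s, ⁅x, g i⁆ := by
  induction s using Finset.cons_induction with
  | empty => simp
  | cons a s ha ih => simp [Finset.sum_cons, lie_add, ih]

lemma inv_sq_add_one_tendsto : Filter.Tendsto (fun t : ℝ => (t ^ 2 + 1)⁻¹)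
    Filter.atTop (nhds 0) :=
  tendsto_inv_atTop_zero.comp
    (tendsto_atTop_add_const_right Filter.atTop 1 (tendsto_pow_atTop two_ne_zero))

end CtrAux

set_option maxHeartbeats 1600000 in
/-- `L_{7,3}²` is a contraction of `L_{7,4}`. -/
theorem L732_is_contraction_of_L74
    (A : Type) [LieRing A] [LieAlgebra ℝ A]
    [TopologicalSpace A] [IsTopologicalAddGroup A] [ContinuousSMul ℝ A] [T2Space A]
    (bA : Module.Basis (Fin 7) ℝ A) (hA : ∀ i j : Fin 7, i < j → ⁅bA i, bA j⁆ = L74T (⇑bA) i j)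
    (B : Type) [LieRing B] [LieAlgebra ℝ B]
    (bB : Module.Basis (Fin 7) ℝ B) (hB : ∀ i j : Fin 7, i < j → ⁅bB i, bB j⁆ = L732T (⇑bB) i j) :
    IsContraction A B := by
  classical
  set f : ℝ → (A ≃ₗ[ℝ] A) := fdiag bA with hfdef
  set e : A ≃ₗ[ℝ] B := bA.equiv bB (Equiv.refl _) with hedef
  have he : ∀ i, e (bA i) = bB i := fun i => by simp [hedef]
  have hes : ∀ i, e.symm (bB i) = bA i := fun i => by
    rw [LinearEquiv.symm_apply_eq, he]
  set G : ℝ → Fin 7 → Fin 7 → A := fun t i j => (f t).symm ⁅f t (bA i), f t (bA j)⁆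
    with hGdef
  set L : Fin 7 → Fin 7 → A := fun i j => e.symm ⁅e (bA i), e (bA j)⁆ with hLdef
  have hGt : ∀ t i j, G t i j = (csc t i * csc t j) • (f t).symm ⁅bA i, bA j⁆ := by
    intro t i j
    simp [hGdef, hfdef, fdiag_apply, smul_lie, lie_smul, smul_smul, map_smul, mul_comm]
  have main : ∀ i j : Fin 7, i < j →
      Filter.Tendsto (fun t => G t i j) Filter.atTop (nhds (L i j)) := by
    intro i j hij
    have hLv : L i j = e.symm (L732T (⇑bB) i j) := by
      rw [hLdef]; simp only [he]; rw [hB i j hij]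
    have hGv : ∀ t, G t i j = (csc t i * csc t j) • (f t).symm (L74T (⇑bA) i j) := by
      intro t; rw [hGt, hA i j hij]
    simp only [funext hGv, hLv]
    fin_cases i <;> fin_cases j <;>
      first
      | exact absurd hij (by decide)
      | (simp +decide only [L74T, L732T, csc, hfdef, if_true, if_false, map_smul, map_neg,
           map_zero, hes, fdiag_symm_apply, smul_smul, inv_one, mul_one, one_mul, one_smul,
           smul_zero, neg_smul, smul_neg, sq_add_one_cancel]
         first
         | exact tendsto_const_nhds
         | (have h0 := inv_sq_add_one_tendsto.smul_const (bA 5)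
            rw [zero_smul] at h0
            exact h0))
  have hGL : ∀ i j : Fin 7, Filter.Tendsto (fun t => G t i j) Filter.atTop (nhds (L i j)) := by
    intro i j
    rcases lt_trichotomy i j with h | h | h
    · exact main i j h
    · subst h
      simp only [hGdef, hLdef, lie_self, map_zero]
      exact tendsto_const_nhds
    · have h1 : (fun t => G t i j) = fun t => -(G t j i) := funext fun t => by
        rw [hGdef]; simp only []
        rw [← lie_skew (f t (bA j)) (f t (bA i)), map_neg, neg_neg]
      have h2 : L i j = -L j i := by
        rw [hLdef]; simp only []
        rw [← lie_skew (e (bA j)) (e (bA i)), map_neg, neg_neg]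
      rw [h1, h2]
      exact (main j i h).neg
  refine ⟨f, e, fun X Y => ?_⟩
  have expand : ∀ t, (f t).symm ⁅f t X, f t Y⁆ =
      ∑ i : Fin 7, ∑ j : Fin 7, (bA.repr X i * bA.repr Y j) • G t i j := by
    intro t
    conv_lhs => rw [← bA.sum_repr X, ← bA.sum_repr Y]
    simp only [map_sum, map_smul, sum_lie', lie_sum', smul_lie, lie_smul, Finset.smul_sum,
      smul_smul, hGdef]
    rw [Finset.sum_comm]
    exact Finset.sum_congr rfl fun i _ => Finset.sum_congr rfl fun j _ => by rw [mul_comm]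
  have expand' : e.symm ⁅e X, e Y⁆ =
      ∑ i : Fin 7, ∑ j : Fin 7, (bA.repr X i * bA.repr Y j) • L i j := by
    conv_lhs => rw [← bA.sum_repr X, ← bA.sum_repr Y]
    simp only [map_sum, map_smul, sum_lie', lie_sum', smul_lie, lie_smul, Finset.smul_sum,
      smul_smul, hLdef]
    rw [Finset.sum_comm]
    exact Finset.sum_congr rfl fun i _ => Finset.sum_congr rfl fun j _ => by rw [mul_comm]
  rw [funext expand, expand']
  exact tendsto_finset_sum _ fun i _ => tendsto_finset_sum _ fun j _ =>
    ((hGL i j).const_smul _)
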